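/- Let n ≥ 1 be an integer, x : {1,…,n} → ℂ and y : {1,…,n−1} → ℂ with sinh(x_j − y_k) ≠ 0 for all j, k. Let A be the n×n matrix whose entries are A(j,k) = φ(x_j, y_k) = e^{y_k − x_j}/sinh(y_k − x_j) for 1 ≤ k ≤ n−1, and whose last column is A(j,n) = 1 for all j. Then (det A)² = D({x_j}_{j=1}^n, {y_k}_{k=1}^{n−1}), i.e. the square of this Cauchy-type determinant equals the squared generalized Cauchy determinant. -/

import Mathlib

/-- `φ(a,b) = e^{b−a}/sinh(b−a)`. -/
noncomputable def phiK (a b : ℂ) : ℂ := Complex.exp (b - a) / Complex.sinh (b - a)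

/-- The squared generalized Cauchy determinant
`D({x_j},{y_k}) = [∏_{j<k} sinh²(x_j−x_k)]·[∏_{j<k} sinh²(y_j−y_k)] / ∏_{j,k} sinh²(x_j−y_k)`. -/
noncomputable def cauchySq {a b : ℕ} (x : Fin a → ℂ) (y : Fin b → ℂ) : ℂ :=
  ((∏ j : Fin a, ∏ k : Fin a, if j < k then Complex.sinh (x j - x k) ^ 2 else 1) *
      (∏ j : Fin b, ∏ k : Fin b, if j < k then Complex.sinh (y j - y k) ^ 2 else 1)) /
    ∏ j : Fin a, ∏ k : Fin b, Complex.sinh (x j - y k) ^ 2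


section CauchyDetHelpers
open Finset Matrix

lemma sinh_key (a b : ℂ) :
    Complex.sinh (b - a) * (2 * Complex.exp (a + b)) =
      Complex.exp (2 * b) - Complex.exp (2 * a) := by
  have e1 : Complex.exp (b - a) * Complex.exp (a + b) = Complex.exp (2 * b) := by
    rw [← Complex.exp_add]; ring_nf
  have e2 : Complex.exp (a - b) * Complex.exp (a + b) = Complex.exp (2 * a) := by
    rw [← Complex.exp_add]; ring_nf
  have e0 : Complex.exp (-(b - a)) = Complex.exp (a - b) := by rw [neg_sub]
  have t := Complex.two_sinh (b - a)
  linear_combination Complex.exp (a + b) * t - Complex.exp (a + b) * e0 + e1 - e2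


lemma sinh_sq (a b : ℂ) : Complex.sinh (a - b) ^ 2 =
    (Complex.exp (2 * a) - Complex.exp (2 * b)) ^ 2 *
      ((2 * Complex.exp (2 * a))⁻¹ * (2 * Complex.exp (2 * b))⁻¹) := by
  have k := sinh_key b a
  have h1 := Complex.exp_ne_zero (2 * a)
  have h2 := Complex.exp_ne_zero (2 * b)
  have h3 : Complex.exp (b + a) ^ 2 = Complex.exp (2 * a) * Complex.exp (2 * b) := by
    rw [sq, ← Complex.exp_add, ← Complex.exp_add]; ring_nf
  have h4 : Complex.sinh (a - b) ^ 2 * (4 * (Complex.exp (2 * a) * Complex.exp (2 * b))) =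
      (Complex.exp (2 * a) - Complex.exp (2 * b)) ^ 2 := by
    linear_combination (Complex.sinh (a - b) * (2 * Complex.exp (b + a)) +
      (Complex.exp (2 * a) - Complex.exp (2 * b))) * k - 4 * Complex.sinh (a - b) ^ 2 * h3
  generalize Complex.exp (2 * a) = A at h1 h4 ⊢
  generalize Complex.exp (2 * b) = B at h2 h4 ⊢
  field_simp
  linear_combination h4

lemma phi_eq (a b : ℂ) (hs : Complex.sinh (a - b) ≠ 0) :
    phiK a b = (-2 * Complex.exp (2 * b)) * (Complex.exp (2 * a) - Complex.exp (2 * b))⁻¹ := by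
  have hsba : Complex.sinh (b - a) ≠ 0 := by
    rw [show b - a = -(a - b) by ring, Complex.sinh_neg]
    simpa using hs
  have k := sinh_key a b
  have hne : Complex.exp (2 * a) - Complex.exp (2 * b) ≠ 0 := by
    intro h0
    apply hsba
    have h2 : Complex.sinh (b - a) * (2 * Complex.exp (a + b)) = 0 := by
      rw [k]; linear_combination -h0
    rcases mul_eq_zero.1 h2 with h | h
    · exact h
    · exact absurd h (mul_ne_zero two_ne_zero (Complex.exp_ne_zero _))
  have e1 : Complex.exp (b - a) * Complex.exp (a + b) = Complex.exp (2 * b) := by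
    rw [← Complex.exp_add]; ring_nf
  rw [phiK, ← div_eq_mul_inv, div_eq_div_iff hsba hne]
  apply mul_right_cancel₀ (Complex.exp_ne_zero (a + b))
  linear_combination (Complex.exp (2*a) - Complex.exp (2*b)) * e1 + Complex.exp (2*b) * k

lemma prod_pairs {n : ℕ} (f : Fin n → ℂ) :
    (∏ j : Fin n, ∏ k : Fin n, if j < k then f j * f k else 1) = (∏ j, f j) ^ (n - 1) := by
  induction n with
  | zero => simp
  | succ n ih =>
    rcases Nat.eq_zero_or_pos n with rfl | hn
    · simp
    have hsplit : (∏ j : Fin (n+1), ∏ k : Fin (n+1), if j < k then f j * f k else 1)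
        = (∏ j : Fin n, ((∏ k : Fin n,
            if j < k then f j.castSucc * f k.castSucc else 1) * (f j.castSucc * f (Fin.last n)))) := by
      rw [Fin.prod_univ_castSucc]
      have hlast : (∏ k : Fin (n+1), if Fin.last n < k then f (Fin.last n) * f k else 1) = 1 := by
        apply Finset.prod_eq_one
        intro k _
        rw [if_neg (not_lt.2 (Fin.le_last k))]
      rw [hlast, mul_one]
      apply Finset.prod_congr rfl
      intro j _
      rw [Fin.prod_univ_castSucc, if_pos (Fin.castSucc_lt_last j)]
      simp [Fin.castSucc_lt_castSucc_iff]
    rw [hsplit, Finset.prod_mul_distrib, ih, Finset.prod_mul_distrib, Finset.prod_const,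
      Finset.card_univ, Fintype.card_fin, Fin.prod_univ_castSucc (f := f), Nat.add_sub_cancel]
    have hP : (∏ j : Fin n, f j.castSucc) ^ (n-1) * (∏ j : Fin n, f j.castSucc)
        = (∏ j : Fin n, f j.castSucc) ^ n := by
      rw [← pow_succ, Nat.sub_add_cancel hn]
    rw [mul_pow, ← hP]; ring

noncomputable def BMat {n : ℕ} (u : Fin (n+1) → ℂ) (v : Fin n → ℂ) :
    Matrix (Fin (n+1)) (Fin (n+1)) ℂ :=
  Matrix.of fun j k => Fin.lastCases 1 (fun k' => (u j - v k')⁻¹) k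


lemma inv_sub_inv'' (a b : ℂ) (ha : a ≠ 0) (hb : b ≠ 0) :
    a⁻¹ + (-1) * b⁻¹ = (b - a) * (b⁻¹ * a⁻¹) := by
  rw [neg_one_mul, ← sub_eq_add_neg, inv_sub_inv ha hb, div_eq_mul_inv, mul_inv]
  ring

lemma pair_split {n : ℕ} (w : Fin (n+1) → ℂ) :
    (∏ j : Fin (n+1), ∏ k : Fin (n+1), if j < k then (w j - w k)^2 else 1)
      = (∏ j : Fin n, ∏ k : Fin n, if j < k then (w j.castSucc - w k.castSucc)^2 else 1)
        * ∏ j : Fin n, (w j.castSucc - w (Fin.last n))^2 := by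
  rw [Fin.prod_univ_castSucc]
  have hlast : (∏ k : Fin (n+1), if Fin.last n < k then (w (Fin.last n) - w k)^2 else 1) = 1 := by
    apply Finset.prod_eq_one
    intro k _
    rw [if_neg (not_lt.2 (Fin.le_last k))]
  rw [hlast, mul_one, ← Finset.prod_mul_distrib]
  apply Finset.prod_congr rfl
  intro j _
  rw [Fin.prod_univ_castSucc, if_pos (Fin.castSucc_lt_last j)]
  simp [Fin.castSucc_lt_castSucc_iff]

lemma core : ∀ (n : ℕ) (u : Fin (n+1) → ℂ) (v : Fin n → ℂ), (∀ j k, u j ≠ v k) →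
    (BMat u v).det ^ 2 * (∏ j, ∏ k, (u j - v k) ^ 2)
      = (∏ j : Fin (n+1), ∏ k : Fin (n+1), if j < k then (u j - u k) ^ 2 else 1)
        * (∏ j : Fin n, ∏ k : Fin n, if j < k then (v j - v k) ^ 2 else 1) := by
  intro n
  induction n with
  | zero =>
    intro u v _
    have : (BMat u v).det = 1 := by
      rw [Matrix.det_fin_one]
      show (Fin.lastCases (motive := fun _ => ℂ) 1 (fun k' => (u 0 - v k')⁻¹) (Fin.last 0)) = 1
      rw [Fin.lastCases_last]
    rw [this]
    simp
  | succ n ih =>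
    intro u v huv
    have hsub : ∀ j k, u j - v k ≠ 0 := fun j k => sub_ne_zero.2 (huv j k)
    set L : Fin (n+2) := Fin.last (n+1) with hL
    set L1 : Fin (n+1) := Fin.last n with hL1
    set u' : Fin (n+1) → ℂ := fun j => u j.castSucc with hu'
    set v' : Fin n → ℂ := fun k => v k.castSucc with hv'
    set B := BMat u v with hB
    set c : Fin (n+2) → ℂ := fun j => if j = L then 0 else -1 with hc
    set B' : Matrix (Fin (n+2)) (Fin (n+2)) ℂ :=
      Matrix.of (fun j k => B j k + c j * B L k) with hB'
    have hdet1 : B'.det = B.det :=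
      Matrix.det_eq_of_forall_row_eq_smul_add_const c L (by simp [hc]) (fun i j => rfl)
    have hBlast : ∀ i : Fin (n+2), B i L = 1 := by
      intro i
      show (Fin.lastCases 1 _ L : ℂ) = 1
      rw [hL, Fin.lastCases_last]
    have hBcs : ∀ (i : Fin (n+2)) (k : Fin (n+1)), B i k.castSucc = (u i - v k)⁻¹ := by
      intro i k
      show (Fin.lastCases 1 _ k.castSucc : ℂ) = _
      rw [Fin.lastCases_castSucc]
    have hcol : ∀ i, B' i L = if i = L then 1 else 0 := by
      intro i
      show B i L + (if i = L then (0:ℂ) else -1) * B L L = if i = L then 1 else 0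
      rw [hBlast i, hBlast L]
      by_cases hi : i = L
      · rw [if_pos hi, if_pos hi]; ring
      · rw [if_neg hi, if_neg hi]; ring
    set C2 : Matrix (Fin (n+1)) (Fin (n+1)) ℂ := Matrix.of (fun j k => (u' j - v k)⁻¹) with hC2
    have hdet2 : B'.det = (B'.submatrix Fin.castSucc Fin.castSucc).det := by
      rw [Matrix.det_succ_column B' L, Finset.sum_eq_single L]
      · rw [hcol L, if_pos rfl]
        rw [show ((-1:ℂ)) ^ ((L:ℕ) + (L:ℕ)) = 1 by rw [← two_mul, pow_mul]; norm_num]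
        rw [one_mul, one_mul, hL, Fin.succAbove_last]
      · intro i _ hi
        rw [hcol i, if_neg hi]; ring
      · intro h; exact absurd (Finset.mem_univ L) h
    have hC1eq : B'.submatrix Fin.castSucc Fin.castSucc
        = Matrix.of (fun j k => (u L - u' j) *
            (Matrix.of (fun (j : Fin (n+1)) (k : Fin (n+1)) => (u L - v k)⁻¹ * C2 j k)) j k) := by
      ext j k
      show B j.castSucc k.castSucc + (if j.castSucc = L then (0:ℂ) else -1) * B L k.castSucc
        = (u L - u' j) * ((u L - v k)⁻¹ * (u' j - v k)⁻¹)
      rw [hBcs, hBcs, if_neg (Fin.ne_of_lt (Fin.castSucc_lt_last j))]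
      have ha := hsub j.castSucc k
      have hb := hsub L k
      show (u j.castSucc - v k)⁻¹ + (-1) * (u L - v k)⁻¹
        = (u L - u j.castSucc) * ((u L - v k)⁻¹ * (u j.castSucc - v k)⁻¹)
      rw [show u L - u j.castSucc = (u L - v k) - (u j.castSucc - v k) by ring]
      exact inv_sub_inv'' _ _ ha hb
    have hdet3 : (B'.submatrix Fin.castSucc Fin.castSucc).det
        = (∏ j, (u L - u' j)) * ((∏ k, (u L - v k)⁻¹) * C2.det) := by
      rw [hC1eq, Matrix.det_mul_column, Matrix.det_mul_row]
    -- column operations on C2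
    set c2 : Fin (n+1) → ℂ := fun k => if k = L1 then 0 else -1 with hc2
    set C3 : Matrix (Fin (n+1)) (Fin (n+1)) ℂ :=
      Matrix.of (fun j k => C2 j k + c2 k * C2 j L1) with hC3
    have hdet4 : C3.det = C2.det := by
      have ht : C3ᵀ.det = C2ᵀ.det :=
        Matrix.det_eq_of_forall_row_eq_smul_add_const c2 L1 (by simp [hc2]) (fun i j => rfl)
      calc C3.det = C3ᵀ.det := (Matrix.det_transpose _).symm
        _ = C2ᵀ.det := ht
        _ = C2.det := Matrix.det_transpose _
    set B2 := BMat u' v' with hB2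
    set s : Fin (n+1) → ℂ := fun k => Fin.lastCases 1 (fun k' => v k'.castSucc - v L1) k with hs
    have hsL : s L1 = 1 := by
      show (Fin.lastCases (motive := fun _ => ℂ) 1
        (fun k' => v k'.castSucc - v L1) (Fin.last n)) = 1
      rw [Fin.lastCases_last]
    have hBL : ∀ j, B2 j L1 = 1 := by
      intro j
      show (Fin.lastCases (motive := fun _ => ℂ) 1
        (fun k' => (u' j - v' k')⁻¹) (Fin.last n)) = 1
      rw [Fin.lastCases_last]
    have hsk : ∀ k' : Fin n, s k'.castSucc = v k'.castSucc - v L1 := by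
      intro k'
      show (Fin.lastCases (motive := fun _ => ℂ) 1
        (fun k' => v k'.castSucc - v L1) k'.castSucc) = _
      rw [Fin.lastCases_castSucc]
    have hBk : ∀ (j : Fin (n+1)) (k' : Fin n), B2 j k'.castSucc = (u' j - v' k')⁻¹ := by
      intro j k'
      show (Fin.lastCases (motive := fun _ => ℂ) 1
        (fun k' => (u' j - v' k')⁻¹) k'.castSucc) = _
      rw [Fin.lastCases_castSucc]
    have hC3eq : C3 = Matrix.of (fun j k => (u' j - v L1)⁻¹ *
        (Matrix.of (fun (j : Fin (n+1)) (k : Fin (n+1)) => s k * B2 j k)) j k) := by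
      ext j k
      induction k using Fin.lastCases with
      | last =>
        show C2 j L1 + (if L1 = L1 then (0:ℂ) else -1) * C2 j L1
          = (u' j - v L1)⁻¹ * (s L1 * B2 j L1)
        rw [if_pos rfl, hsL, hBL]
        show (u' j - v L1)⁻¹ + 0 * (u' j - v L1)⁻¹ = (u' j - v L1)⁻¹ * (1 * 1)
        ring
      | cast k' =>
        show C2 j k'.castSucc + (if k'.castSucc = L1 then (0:ℂ) else -1) * C2 j L1
          = (u' j - v L1)⁻¹ * (s k'.castSucc * B2 j k'.castSucc)
        rw [if_neg (Fin.ne_of_lt (Fin.castSucc_lt_last k')), hsk, hBk]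
        have ha := hsub j.castSucc k'.castSucc
        have hb : u' j - v L1 ≠ 0 := hsub j.castSucc L1
        show (u' j - v k'.castSucc)⁻¹ + (-1) * (u' j - v L1)⁻¹
          = (u' j - v L1)⁻¹ * ((v k'.castSucc - v L1) * (u' j - v k'.castSucc)⁻¹)
        rw [show v k'.castSucc - v L1 = (u' j - v L1) - (u' j - v k'.castSucc) by ring,
          inv_sub_inv'' _ _ ha hb]
        ring
    have hdet5 : C3.det = (∏ j, (u' j - v L1)⁻¹) * ((∏ k, s k) * B2.det) := by
      rw [hC3eq, Matrix.det_mul_column, Matrix.det_mul_row]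
    have hS : (∏ k, s k) = ∏ k' : Fin n, (v k'.castSucc - v L1) := by
      rw [Fin.prod_univ_castSucc, hsL, mul_one]
      exact Finset.prod_congr rfl fun k _ => hsk k
    -- full determinant formula
    have hdetB : B.det = (∏ j, (u L - u' j)) * ((∏ k, (u L - v k)⁻¹) *
        ((∏ j, (u' j - v L1)⁻¹) * ((∏ k' : Fin n, (v k'.castSucc - v L1)) * B2.det))) := by
      rw [← hdet1, hdet2, hdet3, ← hdet4, hdet5, hS]
    have huv' : ∀ (j : Fin (n+1)) (k : Fin n), u' j ≠ v' k := fun j k => huv _ _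
    have hih := ih u' v' huv'
    have hcsu : ∀ j : Fin (n+1), u j.castSucc = u' j := fun _ => rfl
    have hcsv : ∀ k : Fin n, v k.castSucc = v' k := fun _ => rfl
    have hrow : ∀ j : Fin (n+1), (∏ k, (u j.castSucc - v k)^2)
        = (∏ k : Fin n, (u' j - v' k)^2) * (u' j - v L1)^2 := by
      intro j
      rw [Fin.prod_univ_castSucc]
    have hQ : (∏ j, ∏ k, (u j - v k)^2)
        = (∏ j : Fin (n+1), ∏ k : Fin n, (u' j - v' k)^2)
          * ((∏ j : Fin (n+1), (u' j - v L1)^2) * (∏ k, (u L - v k)^2)) := by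
      rw [Fin.prod_univ_castSucc (f := fun j => ∏ k, (u j - v k)^2)]
      rw [Finset.prod_congr rfl (fun j _ => hrow j), Finset.prod_mul_distrib]
      simp only [← hL]
      ring
    have hPu := pair_split u
    have hPv := pair_split v
    simp only [hcsu, hcsv, ← hL, ← hL1] at hPu hPv
    simp only [hcsv] at hdetB
    rw [hdetB, hQ, hPu, hPv]
    have hF : (∏ j, (u L - u' j))^2 = ∏ j : Fin (n+1), (u' j - u L)^2 := by
      rw [← Finset.prod_pow]
      exact Finset.prod_congr rfl fun j _ => by ring
    have hSq : (∏ k' : Fin n, (v' k' - v L1))^2 = ∏ k' : Fin n, (v' k' - v L1)^2 :=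
      (Finset.prod_pow _ _ _).symm
    have hG : (∏ k, (u L - v k)⁻¹)^2 * (∏ k, (u L - v k)^2) = 1 := by
      rw [← Finset.prod_pow, ← Finset.prod_mul_distrib]
      apply Finset.prod_eq_one
      intro k _
      rw [← mul_pow]
      have : (u L - v k)⁻¹ * (u L - v k) = 1 := inv_mul_cancel₀ (hsub L k)
      rw [this]; norm_num
    have hH : (∏ j, (u' j - v L1)⁻¹)^2 * (∏ j : Fin (n+1), (u' j - v L1)^2) = 1 := by
      rw [← Finset.prod_pow, ← Finset.prod_mul_distrib]
      apply Finset.prod_eq_one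
      intro j _
      rw [← mul_pow]
      have : (u' j - v L1)⁻¹ * (u' j - v L1) = 1 := inv_mul_cancel₀ (hsub j.castSucc L1)
      rw [this]; norm_num
    set d := B2.det with hd
    set Pu' := ∏ j : Fin (n+1), ∏ k : Fin (n+1), if j < k then (u' j - u' k)^2 else 1 with hPu'd
    set Pv' := ∏ j : Fin n, ∏ k : Fin n, if j < k then (v' j - v' k)^2 else 1 with hPv'd
    set Q' := ∏ j : Fin (n+1), ∏ k : Fin n, (u' j - v' k)^2 with hQ'd
    set Pa := ∏ j : Fin (n+1), (u' j - u L)^2 with hPad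
    set Pb := ∏ k' : Fin n, (v' k' - v L1)^2 with hPbd
    set Gp := ∏ k : Fin (n+1), (u L - v k)^2 with hGpd
    set Hp := ∏ j : Fin (n+1), (u' j - v L1)^2 with hHpd
    set F1 := ∏ j : Fin (n+1), (u L - u' j) with hF1d
    set G1 := ∏ k : Fin (n+1), (u L - v k)⁻¹ with hG1d
    set H1 := ∏ j : Fin (n+1), (u' j - v L1)⁻¹ with hH1d
    set Sv := ∏ k' : Fin n, (v' k' - v L1) with hSvd
    rw [show (F1 * (G1 * (H1 * (Sv * d))))^2
        = F1^2 * (G1^2 * (H1^2 * (Sv^2 * d^2))) from by ring, hF, hSq]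
    linear_combination Pa*Pb*G1^2*Gp*H1^2*Hp*hih + Pa*Pb*Pu'*Pv'*H1^2*Hp*hG
      + Pa*Pb*Pu'*Pv'*hH

/-- The square of the Cauchy-type determinant with entries `φ(x_j, y_k)` and last column
of ones equals the squared generalized Cauchy determinant. -/
theorem cauchy_det_squared (m : ℕ) (x : Fin (m + 1) → ℂ) (y : Fin m → ℂ)
    (h : ∀ (j : Fin (m + 1)) (k : Fin m), Complex.sinh (x j - y k) ≠ 0)
    (A : Matrix (Fin (m + 1)) (Fin (m + 1)) ℂ)
    (hA : ∀ (j : Fin (m + 1)) (k : Fin (m + 1)),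
      A j k = Fin.lastCases 1 (fun k' => phiK (x j) (y k')) k) :
    A.det ^ 2 = cauchySq x y := by
  rcases Nat.eq_zero_or_pos m with hm0 | hm
  · subst hm0
    have hA00 : A 0 0 = 1 := by
      rw [hA]
      show (Fin.lastCases (motive := fun _ => ℂ) 1 (fun k' => phiK (x 0) (y k')) (Fin.last 0)) = 1
      rw [Fin.lastCases_last]
    rw [Matrix.det_fin_one, hA00, cauchySq]
    simp
  -- main case
  have huv : ∀ (j : Fin (m+1)) (k : Fin m),
      (fun j => Complex.exp (2 * x j)) j ≠ (fun k => Complex.exp (2 * y k)) k := by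
    intro j k h0
    apply h j k
    have hk := sinh_key (y k) (x j)
    have h2 : Complex.sinh (x j - y k) * (2 * Complex.exp (y k + x j)) = 0 := by
      rw [hk]
      simpa using sub_eq_zero.2 h0
    rcases mul_eq_zero.1 h2 with h3 | h3
    · exact h3
    · exact absurd h3 (mul_ne_zero two_ne_zero (Complex.exp_ne_zero _))
  have hAB : A = Matrix.of (fun j k => (Fin.lastCases (motive := fun _ => ℂ) 1
      (fun k' => -2 * Complex.exp (2 * y k')) k)
        * (BMat (fun j => Complex.exp (2 * x j)) (fun k => Complex.exp (2 * y k))) j k) := by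
    ext j k
    rw [hA]
    induction k using Fin.lastCases with
    | last =>
      show (Fin.lastCases (motive := fun _ => ℂ) 1 (fun k' => phiK (x j) (y k')) (Fin.last m))
        = (Fin.lastCases (motive := fun _ => ℂ) 1
            (fun k' => -2 * Complex.exp (2 * y k')) (Fin.last m))
          * (Fin.lastCases (motive := fun _ => ℂ) 1
              (fun k' => (Complex.exp (2 * x j) - Complex.exp (2 * y k'))⁻¹) (Fin.last m))
      rw [Fin.lastCases_last, Fin.lastCases_last, Fin.lastCases_last, one_mul]
    | cast k' =>
      show (Fin.lastCases (motive := fun _ => ℂ) 1 (fun k' => phiK (x j) (y k')) k'.castSucc)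
        = (Fin.lastCases (motive := fun _ => ℂ) 1
            (fun k' => -2 * Complex.exp (2 * y k')) k'.castSucc)
          * (Fin.lastCases (motive := fun _ => ℂ) 1
              (fun k' => (Complex.exp (2 * x j) - Complex.exp (2 * y k'))⁻¹) k'.castSucc)
      rw [Fin.lastCases_castSucc, Fin.lastCases_castSucc, Fin.lastCases_castSucc]
      rw [phi_eq (x j) (y k') (h j k')]
  have hdetA : A.det = (∏ k' : Fin m, (-2 * Complex.exp (2 * y k')))
      * (BMat (fun j => Complex.exp (2 * x j)) (fun k => Complex.exp (2 * y k))).det := by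
    rw [hAB, Matrix.det_mul_row]
    congr 1
    rw [Fin.prod_univ_castSucc]
    have h1 : (Fin.lastCases (motive := fun _ => ℂ) 1
        (fun k' => -2 * Complex.exp (2 * y k')) (Fin.last m)) = 1 := by
      rw [Fin.lastCases_last]
    have h2 : ∀ k' : Fin m, (Fin.lastCases (motive := fun _ => ℂ) 1
        (fun k' => -2 * Complex.exp (2 * y k')) k'.castSucc) = -2 * Complex.exp (2 * y k') := by
      intro k'; rw [Fin.lastCases_castSucc]
    rw [h1, mul_one]
    exact Finset.prod_congr rfl fun k _ => h2 k
  have hcore : (BMat (fun j => Complex.exp (2 * x j)) (fun k => Complex.exp (2 * y k))).det ^ 2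
      * (∏ j : Fin (m+1), ∏ k : Fin m, (Complex.exp (2 * x j) - Complex.exp (2 * y k)) ^ 2)
      = (∏ j : Fin (m+1), ∏ k : Fin (m+1),
          if j < k then (Complex.exp (2 * x j) - Complex.exp (2 * x k)) ^ 2 else 1)
        * (∏ j : Fin m, ∏ k : Fin m,
          if j < k then (Complex.exp (2 * y j) - Complex.exp (2 * y k)) ^ 2 else 1) :=
    core m _ _ huv
  have hPxs : (∏ j : Fin (m+1), ∏ k : Fin (m+1), if j < k then Complex.sinh (x j - x k)^2 else 1)
      = (∏ j : Fin (m+1), ∏ k : Fin (m+1),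
          if j < k then (Complex.exp (2*x j) - Complex.exp (2*x k))^2 else 1)
        * (∏ j : Fin (m+1), (2 * Complex.exp (2 * x j))⁻¹)^m := by
    have e1 : ∀ j k : Fin (m+1), (if j < k then Complex.sinh (x j - x k)^2 else 1)
        = (if j < k then (Complex.exp (2*x j) - Complex.exp (2*x k))^2 else 1)
          * (if j < k then (2*Complex.exp (2*x j))⁻¹ * (2*Complex.exp (2*x k))⁻¹ else 1) := by
      intro j k
      by_cases hjk : j < k
      · rw [if_pos hjk, if_pos hjk, if_pos hjk, sinh_sq]
      · rw [if_neg hjk, if_neg hjk, if_neg hjk, one_mul]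
    have e2 : (∏ j : Fin (m+1), ∏ k : Fin (m+1),
        if j < k then (2*Complex.exp (2*x j))⁻¹ * (2*Complex.exp (2*x k))⁻¹ else 1)
        = (∏ j : Fin (m+1), (2*Complex.exp (2*x j))⁻¹)^((m+1)-1) := prod_pairs _
    rw [Nat.add_sub_cancel] at e2
    rw [Finset.prod_congr rfl (fun j _ => Finset.prod_congr rfl (fun k _ => e1 j k)),
      Finset.prod_congr rfl (fun j (_ : j ∈ Finset.univ) => Finset.prod_mul_distrib),
      Finset.prod_mul_distrib, e2]
  have hPys : (∏ j : Fin m, ∏ k : Fin m, if j < k then Complex.sinh (y j - y k)^2 else 1)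
      = (∏ j : Fin m, ∏ k : Fin m,
          if j < k then (Complex.exp (2*y j) - Complex.exp (2*y k))^2 else 1)
        * (∏ j : Fin m, (2 * Complex.exp (2 * y j))⁻¹)^(m-1) := by
    have e1 : ∀ j k : Fin m, (if j < k then Complex.sinh (y j - y k)^2 else 1)
        = (if j < k then (Complex.exp (2*y j) - Complex.exp (2*y k))^2 else 1)
          * (if j < k then (2*Complex.exp (2*y j))⁻¹ * (2*Complex.exp (2*y k))⁻¹ else 1) := by
      intro j k
      by_cases hjk : j < k
      · rw [if_pos hjk, if_pos hjk, if_pos hjk, sinh_sq]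
      · rw [if_neg hjk, if_neg hjk, if_neg hjk, one_mul]
    have e2 : (∏ j : Fin m, ∏ k : Fin m,
        if j < k then (2*Complex.exp (2*y j))⁻¹ * (2*Complex.exp (2*y k))⁻¹ else 1)
        = (∏ j : Fin m, (2*Complex.exp (2*y j))⁻¹)^(m-1) := prod_pairs _
    rw [Finset.prod_congr rfl (fun j _ => Finset.prod_congr rfl (fun k _ => e1 j k)),
      Finset.prod_congr rfl (fun j (_ : j ∈ Finset.univ) => Finset.prod_mul_distrib),
      Finset.prod_mul_distrib, e2]
  have hQs : (∏ j : Fin (m+1), ∏ k : Fin m, Complex.sinh (x j - y k)^2)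
      = (∏ j : Fin (m+1), ∏ k : Fin m, (Complex.exp (2*x j) - Complex.exp (2*y k))^2)
        * ((∏ j : Fin (m+1), (2*Complex.exp (2*x j))⁻¹)^m
            * (∏ k : Fin m, (2*Complex.exp (2*y k))⁻¹)^(m+1)) := by
    have e1 : ∀ (j : Fin (m+1)) (k : Fin m), Complex.sinh (x j - y k)^2
        = (Complex.exp (2*x j) - Complex.exp (2*y k))^2
          * ((2*Complex.exp (2*x j))⁻¹ * (2*Complex.exp (2*y k))⁻¹) := fun j k => sinh_sq _ _
    have e3 : ∀ j : Fin (m+1),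
        (∏ k : Fin m, ((2*Complex.exp (2*x j))⁻¹ * (2*Complex.exp (2*y k))⁻¹))
        = ((2*Complex.exp (2*x j))⁻¹)^m * (∏ k : Fin m, (2*Complex.exp (2*y k))⁻¹) := by
      intro j
      rw [Finset.prod_mul_distrib, Finset.prod_const, Finset.card_univ, Fintype.card_fin]
    rw [Finset.prod_congr rfl (fun j _ => Finset.prod_congr rfl (fun k (_ : k ∈ Finset.univ) => e1 j k)),
      Finset.prod_congr rfl (fun j (_ : j ∈ Finset.univ) => Finset.prod_mul_distrib),
      Finset.prod_mul_distrib,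
      Finset.prod_congr rfl (fun j (_ : j ∈ Finset.univ) => e3 j),
      Finset.prod_mul_distrib, Finset.prod_pow, Finset.prod_const, Finset.card_univ,
      Fintype.card_fin]
  have hQs0 : (∏ j : Fin (m+1), ∏ k : Fin m, Complex.sinh (x j - y k)^2) ≠ 0 := by
    rw [Finset.prod_ne_zero_iff]
    intro j _
    rw [Finset.prod_ne_zero_iff]
    intro k _
    exact pow_ne_zero 2 (h j k)
  have hW : (∏ k : Fin m, (2 * Complex.exp (2 * y k))) ≠ 0 := by
    rw [Finset.prod_ne_zero_iff]
    intro k _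
    exact mul_ne_zero two_ne_zero (Complex.exp_ne_zero _)
  have hD0 : (∏ k' : Fin m, (-2 * Complex.exp (2*y k')))^2
      = (∏ k : Fin m, (2 * Complex.exp (2 * y k)))^2 := by
    rw [← Finset.prod_pow, ← Finset.prod_pow]
    exact Finset.prod_congr rfl fun k _ => by ring
  have hWinv : (∏ k : Fin m, (2*Complex.exp (2*y k))⁻¹)
      = (∏ k : Fin m, (2 * Complex.exp (2 * y k)))⁻¹ := Finset.prod_inv_distrib _
  show A.det ^ 2 = _
  rw [cauchySq, eq_div_iff hQs0, hdetA, hQs, hPxs, hPys, mul_pow, hD0]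
  rw [hWinv]
  set W := ∏ k : Fin m, (2 * Complex.exp (2 * y k)) with hWd
  have key : W^2 * (W⁻¹)^(m+1) = (W⁻¹)^(m-1) := by
    have hsp : (W⁻¹)^(m+1) = (W⁻¹)^(m-1) * (W⁻¹)^2 := by
      rw [← pow_add]
      congr 1
      omega
    rw [hsp]
    calc W^2 * ((W⁻¹)^(m-1) * (W⁻¹)^2) = (W⁻¹)^(m-1) * (W * W⁻¹)^2 := by
          rw [mul_pow]; ring
      _ = (W⁻¹)^(m-1) := by rw [mul_inv_cancel₀ hW, one_pow, mul_one]
  set X := ∏ j : Fin (m+1), (2*Complex.exp (2*x j))⁻¹ with hXd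
  set Q := ∏ j : Fin (m+1), ∏ k : Fin m, (Complex.exp (2*x j) - Complex.exp (2*y k))^2 with hQd
  set Pu := ∏ j : Fin (m+1), ∏ k : Fin (m+1),
    if j < k then (Complex.exp (2*x j) - Complex.exp (2*x k))^2 else 1 with hPud
  set Pv := ∏ j : Fin m, ∏ k : Fin m,
    if j < k then (Complex.exp (2*y j) - Complex.exp (2*y k))^2 else 1 with hPvd
  set bd := (BMat (fun j => Complex.exp (2 * x j)) (fun k => Complex.exp (2 * y k))).det with hbd
  linear_combination X^m*(W⁻¹)^(m-1)*hcore + X^m*bd^2*Q*key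

end CauchyDetHelpers
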